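/- In the Chow ring A*(M) of a loopless matroid M of rank r+1 on ground set E = {0,…,n}, set α = Σ_{i ∈ F} x_F (for any fixed i ∈ E) and β = Σ_{i ∉ F} x_F. Then for every positive integer k ≤ r, β^k = Σ_𝓕 x_𝓕, where the sum ranges over all descending k-step flags 𝓕 = {F_1 ⊊ ⋯ ⊊ F_k} of nonempty proper flats satisfying min(F_1) > min(F_2) > ⋯ > min(F_k) > 0. -/
import Mathlib


open Finset

/-- A matroid on a finite ground set, given by its rank function. -/
structure FinMatroid (E : Type*) [DecidableEq E] [Fintype E] where
  rk : Finset E → ℕ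
  rk_empty : rk ∅ = 0
  rk_le_card : ∀ I, rk I ≤ I.card
  rk_mono : ∀ ⦃I J⦄, I ⊆ J → rk I ≤ rk J
  rk_submodular : ∀ I J, rk (I ∪ J) + rk (I ∩ J) ≤ rk I + rk J

namespace FinMatroid

variable {E : Type*} [DecidableEq E] [Fintype E]

/-- A matroid is loopless if every singleton has rank one. -/
def Loopless (M : FinMatroid E) : Prop := ∀ e : E, M.rk {e} = 1

/-- A flat of a matroid: a closed set, i.e. adding any new element increases the rank. -/
def IsFlat (M : FinMatroid E) (F : Finset E) : Prop :=
  ∀ e ∉ F, M.rk F < M.rk (insert e F)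

/-- The characteristic polynomial `χ_M(λ) = Σ_{I ⊆ E} (-1)^{|I|} λ^{crk I}`. -/
noncomputable def charPoly (M : FinMatroid E) : Polynomial ℤ :=
  ∑ I ∈ (Finset.univ : Finset E).powerset,
    Polynomial.C ((-1 : ℤ) ^ I.card) * Polynomial.X ^ (M.rk Finset.univ - M.rk I)

/-- The reduced characteristic polynomial `χ̄_M(λ) = χ_M(λ)/(λ-1)`. -/
noncomputable def redCharPoly (M : FinMatroid E) : Polynomial ℤ :=
  M.charPoly /ₘ (Polynomial.X - 1)

end FinMatroid

open scoped Classical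

namespace FinMatroid

variable {E : Type*} [DecidableEq E] [Fintype E]

/-- The nonempty proper flats of a matroid. -/
def Flt (M : FinMatroid E) : Type _ :=
  {F : Finset E // M.IsFlat F ∧ F.Nonempty ∧ F ≠ Finset.univ}

noncomputable instance (M : FinMatroid E) : Fintype M.Flt := by
  unfold Flt; infer_instance

/-- The ideal of relations defining the Chow ring of a matroid:
incomparability relations `x_{F₁} x_{F₂}` for incomparable nonempty proper flats, and
linear relations `Σ_{i₁ ∈ F} x_F - Σ_{i₂ ∈ F} x_F` for distinct ground set elements. -/
noncomputable def chowIdeal (M : FinMatroid E) : Ideal (MvPolynomial M.Flt ℤ) :=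
  Ideal.span
    ({p | ∃ F₁ F₂ : M.Flt, ¬F₁.1 ⊆ F₂.1 ∧ ¬F₂.1 ⊆ F₁.1 ∧
        p = MvPolynomial.X F₁ * MvPolynomial.X F₂} ∪
     {p | ∃ i₁ i₂ : E, i₁ ≠ i₂ ∧
        p = (∑ F : M.Flt, if i₁ ∈ F.1 then MvPolynomial.X F else 0) -
            (∑ F : M.Flt, if i₂ ∈ F.1 then MvPolynomial.X F else 0)})

/-- The Chow ring `A*(M)` of a matroid. -/
noncomputable abbrev ChowRing (M : FinMatroid E) := MvPolynomial M.Flt ℤ ⧸ M.chowIdeal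

end FinMatroid

namespace BetaAux

open FinMatroid MvPolynomial

variable {n : ℕ} (M : FinMatroid (Fin (n + 1)))

noncomputable def mn (F : M.Flt) : Fin (n + 1) := F.1.min' F.2.2.1

lemma mn_mem (F : M.Flt) : mn M F ∈ F.1 := Finset.min'_mem _ _

lemma mn_le {F : M.Flt} {x : Fin (n + 1)} (hx : x ∈ F.1) : mn M F ≤ x :=
  Finset.min'_le _ _ hx

lemma mn_le_mn {F G : M.Flt} (h : F.1 ⊆ G.1) : mn M G ≤ mn M F :=
  mn_le M (h (mn_mem M F))

lemma mn_lt_of_not_mem {F G : M.Flt} (h : F.1 ⊆ G.1) (hm : mn M G ∉ F.1) :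
    mn M G < mn M F :=
  lt_of_le_of_ne (mn_le_mn M h) (fun he => hm (by rw [he]; exact mn_mem M F))

lemma not_mem_of_mn_lt {F G : M.Flt} (h : mn M G < mn M F) : mn M G ∉ F.1 :=
  fun hm => absurd (mn_le M hm) (not_le.mpr h)

lemma pos_mn_iff {F : M.Flt} : (0 : Fin (n + 1)) < mn M F ↔ (0 : Fin (n + 1)) ∉ F.1 := by
  constructor
  · intro h hm
    exact absurd (mn_le M hm) (not_le.mpr h)
  · intro h
    rw [Fin.pos_iff_ne_zero]
    intro h0
    exact h (h0 ▸ mn_mem M F)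

noncomputable def betaP (i : Fin (n + 1)) : MvPolynomial M.Flt ℤ :=
  ∑ F : M.Flt, if i ∉ F.1 then MvPolynomial.X F else 0

lemma beta_indep (i j : Fin (n + 1)) :
    Ideal.Quotient.mk M.chowIdeal (betaP M i) = Ideal.Quotient.mk M.chowIdeal (betaP M j) := by
  rcases eq_or_ne i j with rfl | hij
  · rfl
  rw [Ideal.Quotient.eq]
  have hterm : ∀ F : M.Flt,
      (if i ∉ F.1 then (X F : MvPolynomial M.Flt ℤ) else 0) -
        (if j ∉ F.1 then X F else 0) =
      (if j ∈ F.1 then (X F : MvPolynomial M.Flt ℤ) else 0) -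
        (if i ∈ F.1 then X F else 0) := by
    intro F
    by_cases h1 : i ∈ F.1 <;> by_cases h2 : j ∈ F.1 <;> simp [h1, h2]
  have : betaP M i - betaP M j =
      (∑ F : M.Flt, if j ∈ F.1 then (X F : MvPolynomial M.Flt ℤ) else 0) -
      (∑ F : M.Flt, if i ∈ F.1 then X F else 0) := by
    rw [betaP, betaP, ← Finset.sum_sub_distrib, ← Finset.sum_sub_distrib]
    exact Finset.sum_congr rfl fun F _ => hterm F
  rw [this]
  exact Ideal.subset_span (Or.inr ⟨j, i, hij.symm, rfl⟩)

lemma incomp_zero {F₁ F₂ : M.Flt} (h1 : ¬F₁.1 ⊆ F₂.1) (h2 : ¬F₂.1 ⊆ F₁.1) :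
    Ideal.Quotient.mk M.chowIdeal (X F₁ * X F₂) = 0 := by
  rw [Ideal.Quotient.eq_zero_iff_mem]
  exact Ideal.subset_span (Or.inl ⟨F₁, F₂, h1, h2, rfl⟩)

def P (k : ℕ) (𝓕 : Fin k → M.Flt) : Prop :=
  (∀ m m' : Fin k, m < m' → (𝓕 m).1 ⊂ (𝓕 m').1) ∧
  (∀ m m' : Fin k, m < m' → mn M (𝓕 m') < mn M (𝓕 m)) ∧
  (∀ m : Fin k, (0 : Fin (n + 1)) < mn M (𝓕 m))

noncomputable def S (k : ℕ) : MvPolynomial M.Flt ℤ :=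
  ∑ 𝓕 : {𝓕 : Fin k → M.Flt // P M k 𝓕}, ∏ m, MvPolynomial.X (𝓕.1 m)

lemma sum_ite_subtype {β : Type*} [AddCommMonoid β] (p : M.Flt → Prop) [DecidablePred p] (f : M.Flt → β) :
    (∑ F : M.Flt, if p F then f F else 0) = ∑ F : {F : M.Flt // p F}, f F.1 := by
  classical
  rw [← Finset.sum_filter]
  exact Finset.sum_subtype _ (by simp) f

lemma base : betaP M 0 = S M 1 := by
  rw [betaP, sum_ite_subtype M (fun F => (0 : Fin (n + 1)) ∉ F.1) (fun F => X F), S]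
  refine Fintype.sum_equiv ?_ _ _ ?_
  · exact
    { toFun := fun F => ⟨fun _ => F.1, by
        refine ⟨?_, ?_, ?_⟩
        · intro m m' hmm
          exact absurd (Fin.lt_def.mp hmm) (by have := m.isLt; have := m'.isLt; omega)
        · intro m m' hmm
          exact absurd (Fin.lt_def.mp hmm) (by have := m.isLt; have := m'.isLt; omega)
        · intro m
          exact (pos_mn_iff M).mpr F.2⟩
      invFun := fun 𝓕 => ⟨𝓕.1 0, (pos_mn_iff M).mp (𝓕.2.2.2 0)⟩
      left_inv := fun F => Subtype.ext rfl
      right_inv := fun 𝓕 => Subtype.ext (funext fun m => by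
        rw [Subsingleton.elim m 0]) }
  · intro F
    simp [Fin.prod_univ_one]

lemma fin_succ_lt_succ {k : ℕ} {m m' : Fin k} (h : m < m') : m.succ < m'.succ := by
  rw [Fin.lt_def] at h ⊢
  simpa using h

lemma tail_P {k : ℕ} {𝓖 : Fin (k + 2) → M.Flt} (h : P M (k + 2) 𝓖) :
    P M (k + 1) (fun m => 𝓖 m.succ) := by
  refine ⟨fun m m' hmm => h.1 _ _ (fin_succ_lt_succ hmm),
    fun m m' hmm => h.2.1 _ _ (fin_succ_lt_succ hmm), fun m => h.2.2 m.succ⟩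

lemma cons_P {k : ℕ} {𝓕 : Fin (k + 1) → M.Flt} (h : P M (k + 1) 𝓕) {F : M.Flt}
    (h1 : F.1 ⊂ (𝓕 0).1) (h2 : mn M (𝓕 0) < mn M F) :
    P M (k + 2) (Fin.cons F 𝓕) := by
  have hzero : ∀ j : Fin (k + 1), F.1 ⊂ (𝓕 j).1 ∧ mn M (𝓕 j) < mn M F := by
    intro j
    rcases eq_or_ne j 0 with rfl | hj
    · exact ⟨h1, h2⟩
    · have h0j : (0 : Fin (k + 1)) < j := Fin.pos_of_ne_zero hj
      exact ⟨h1.trans (h.1 0 j h0j), (h.2.1 0 j h0j).trans h2⟩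
  refine ⟨?_, ?_, ?_⟩
  · intro m m' hmm
    induction m using Fin.cases with
    | zero =>
      obtain ⟨j, rfl⟩ := Fin.eq_succ_of_ne_zero (Fin.pos_iff_ne_zero.mp hmm)
      simpa using (hzero j).1
    | succ i =>
      obtain ⟨j, rfl⟩ := Fin.eq_succ_of_ne_zero
        (Fin.pos_iff_ne_zero.mp (lt_trans (Fin.succ_pos i) hmm))
      have hij : i < j := by
        rw [Fin.lt_def] at hmm ⊢; simpa using hmm
      simpa using h.1 i j hij
  · intro m m' hmm
    induction m using Fin.cases with
    | zero =>
      obtain ⟨j, rfl⟩ := Fin.eq_succ_of_ne_zero (Fin.pos_iff_ne_zero.mp hmm)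
      simpa using (hzero j).2
    | succ i =>
      obtain ⟨j, rfl⟩ := Fin.eq_succ_of_ne_zero
        (Fin.pos_iff_ne_zero.mp (lt_trans (Fin.succ_pos i) hmm))
      have hij : i < j := by
        rw [Fin.lt_def] at hmm ⊢; simpa using hmm
      simpa using h.2.1 i j hij
  · intro m
    induction m using Fin.cases with
    | zero => simpa using lt_trans (h.2.2 0) h2
    | succ i => simpa using h.2.2 i

lemma flag_mul_beta {k : ℕ} (𝓕 : Fin (k + 1) → M.Flt) (h𝓕 : P M (k + 1) 𝓕) :
    Ideal.Quotient.mk M.chowIdeal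
        ((∏ m, MvPolynomial.X (𝓕 m)) * betaP M (mn M (𝓕 0))) =
    ∑ F : {F : M.Flt // F.1 ⊂ (𝓕 0).1 ∧ mn M (𝓕 0) < mn M F},
      Ideal.Quotient.mk M.chowIdeal (MvPolynomial.X F.1 * ∏ m, MvPolynomial.X (𝓕 m)) := by
  rw [← sum_ite_subtype M (fun F => F.1 ⊂ (𝓕 0).1 ∧ mn M (𝓕 0) < mn M F)
    (fun F => Ideal.Quotient.mk M.chowIdeal (X F * ∏ m, X (𝓕 m)))]
  rw [betaP, Finset.mul_sum, map_sum]
  refine Finset.sum_congr rfl fun F _ => ?_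
  by_cases hc : F.1 ⊂ (𝓕 0).1 ∧ mn M (𝓕 0) < mn M F
  · have hi : mn M (𝓕 0) ∉ F.1 := not_mem_of_mn_lt M hc.2
    rw [if_pos hi, if_pos hc, mul_comm]
  · rw [if_neg hc]
    by_cases hi : mn M (𝓕 0) ∈ F.1
    · rw [if_neg (not_not_intro hi), mul_zero, map_zero]
    · rw [if_pos hi]
      have h2 : ¬(𝓕 0).1 ⊆ F.1 := fun hsub => hi (hsub (mn_mem M (𝓕 0)))
      have h1 : ¬F.1 ⊆ (𝓕 0).1 := by
        intro hsub
        exact hc ⟨⟨hsub, fun hsub' => h2 hsub'⟩, mn_lt_of_not_mem M hsub hi⟩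
      have key : (∏ m, (X (𝓕 m) : MvPolynomial M.Flt ℤ)) * X F =
          (X F * X (𝓕 0)) * ∏ m : Fin k, X (𝓕 m.succ) := by
        rw [Fin.prod_univ_succ]; ring
      rw [key, map_mul, incomp_zero M h1 h2, zero_mul]

noncomputable def tailFlag {k : ℕ} (𝓖 : {𝓖 : Fin (k + 2) → M.Flt // P M (k + 2) 𝓖}) :
    {𝓕 : Fin (k + 1) → M.Flt // P M (k + 1) 𝓕} :=
  ⟨fun m => 𝓖.1 m.succ, tail_P M 𝓖.2⟩

lemma fiber_sum {k : ℕ} (𝓕 : {𝓕 : Fin (k + 1) → M.Flt // P M (k + 1) 𝓕}) :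
    (∑ F : {F : M.Flt // F.1 ⊂ (𝓕.1 0).1 ∧ mn M (𝓕.1 0) < mn M F},
      Ideal.Quotient.mk M.chowIdeal (MvPolynomial.X F.1 * ∏ m, MvPolynomial.X (𝓕.1 m))) =
    ∑ 𝓖 ∈ Finset.univ.filter (fun 𝓖 => tailFlag M 𝓖 = 𝓕),
      Ideal.Quotient.mk M.chowIdeal (∏ m : Fin (k + 2), MvPolynomial.X (𝓖.1 m)) := by
  have htail : ∀ 𝓖 : {𝓖 : Fin (k + 2) → M.Flt // P M (k + 2) 𝓖},
      tailFlag M 𝓖 = 𝓕 → ∀ m : Fin (k + 1), 𝓖.1 m.succ = 𝓕.1 m := by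
    intro 𝓖 hG m
    exact congrFun (congrArg Subtype.val hG) m
  refine Finset.sum_bij'
    (i := fun F _ => ⟨Fin.cons F.1 𝓕.1, cons_P M 𝓕.2 F.2.1 F.2.2⟩)
    (j := fun 𝓖 h𝓖 => ⟨𝓖.1 0, ?_, ?_⟩) ?_ ?_ ?_ ?_ ?_
  · have hG : tailFlag M 𝓖 = 𝓕 := (Finset.mem_filter.mp h𝓖).2
    have := 𝓖.2.1 0 ((0 : Fin (k + 1)).succ) (Fin.succ_pos 0)
    rwa [htail 𝓖 hG 0] at this
  · have hG : tailFlag M 𝓖 = 𝓕 := (Finset.mem_filter.mp h𝓖).2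
    have := 𝓖.2.2.1 0 ((0 : Fin (k + 1)).succ) (Fin.succ_pos 0)
    rwa [htail 𝓖 hG 0] at this
  · intro F hF
    rw [Finset.mem_filter]
    refine ⟨Finset.mem_univ _, Subtype.ext (_root_.funext fun m => ?_)⟩
    dsimp only [tailFlag]
    exact Fin.cons_succ _ _ m
  · intro 𝓖 h𝓖
    exact Finset.mem_univ _
  · intro F hF
    refine Subtype.ext ?_
    dsimp only
    exact Fin.cons_zero _ _
  · intro 𝓖 h𝓖
    have hG : tailFlag M 𝓖 = 𝓕 := (Finset.mem_filter.mp h𝓖).2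
    refine Subtype.ext (_root_.funext fun m => ?_)
    dsimp only
    induction m using Fin.cases with
    | zero => exact Fin.cons_zero _ _
    | succ m => rw [Fin.cons_succ, htail 𝓖 hG m]
  · intro F hF
    congr 1
    conv_rhs => rw [Fin.prod_univ_succ]
    dsimp only
    rw [Fin.cons_zero]
    exact congrArg _ (Finset.prod_congr rfl fun m _ => by rw [Fin.cons_succ])

lemma key (k : ℕ) :
    (Ideal.Quotient.mk M.chowIdeal (betaP M 0)) ^ (k + 1) =
    Ideal.Quotient.mk M.chowIdeal (S M (k + 1)) := by
  induction k with
  | zero => rw [pow_one, base]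
  | succ k ih =>
    rw [pow_succ, ih, S, map_sum, Finset.sum_mul]
    have step1 : ∀ 𝓕 : {𝓕 : Fin (k + 1) → M.Flt // P M (k + 1) 𝓕},
        Ideal.Quotient.mk M.chowIdeal (∏ m, MvPolynomial.X (𝓕.1 m)) *
          Ideal.Quotient.mk M.chowIdeal (betaP M 0) =
        ∑ F : {F : M.Flt // F.1 ⊂ (𝓕.1 0).1 ∧ mn M (𝓕.1 0) < mn M F},
          Ideal.Quotient.mk M.chowIdeal (MvPolynomial.X F.1 * ∏ m, MvPolynomial.X (𝓕.1 m)) := by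
      intro 𝓕
      rw [beta_indep M 0 (mn M (𝓕.1 0)), ← map_mul]
      exact flag_mul_beta M 𝓕.1 𝓕.2
    rw [Finset.sum_congr rfl fun 𝓕 _ => step1 𝓕,
      Finset.sum_congr rfl fun 𝓕 _ => fiber_sum M 𝓕, S, map_sum]
    exact Finset.sum_fiberwise _ _ _

end BetaAux

/-- In the Chow ring of a loopless matroid `M` of rank `r+1` on
`E = {0,…,n}`, with `β = Σ_{i ∉ F} x_F` (for any fixed `i ∈ E`), for every `1 ≤ k ≤ r`
one has `β^k = Σ_𝓕 x_𝓕`, the sum over all descending `k`-step flags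
`F_1 ⊊ ⋯ ⊊ F_k` of nonempty proper flats with `min F_1 > min F_2 > ⋯ > min F_k > 0`. -/
theorem beta_pow_eq_descending_flags (n r k : ℕ) (M : FinMatroid (Fin (n + 1)))
    (hM : M.Loopless) (hrk : M.rk Finset.univ = r + 1) (hk : 1 ≤ k) (hkr : k ≤ r)
    (i : Fin (n + 1)) :
    (Ideal.Quotient.mk M.chowIdeal
        (∑ F : M.Flt, if i ∉ F.1 then MvPolynomial.X F else 0)) ^ k =
    Ideal.Quotient.mk M.chowIdeal
      (∑ 𝓕 : {𝓕 : Fin k → M.Flt //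
          (∀ m m' : Fin k, m < m' → (𝓕 m).1 ⊂ (𝓕 m').1) ∧
          (∀ m m' : Fin k, m < m' →
            (𝓕 m').1.min' (𝓕 m').2.2.1 < (𝓕 m).1.min' (𝓕 m).2.2.1) ∧
          (0 : Fin (n + 1)) < (𝓕 ⟨k - 1, by omega⟩).1.min' (𝓕 ⟨k - 1, by omega⟩).2.2.1},
        ∏ m : Fin k, MvPolynomial.X (𝓕.1 m)) := by
  obtain ⟨k', rfl⟩ : ∃ k', k = k' + 1 := ⟨k - 1, by omega⟩
  have h1 : Ideal.Quotient.mk M.chowIdeal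
      (∑ F : M.Flt, if i ∉ F.1 then MvPolynomial.X F else 0) =
      Ideal.Quotient.mk M.chowIdeal (BetaAux.betaP M 0) := BetaAux.beta_indep M i 0
  rw [h1, BetaAux.key M k']
  congr 1
  rw [BetaAux.S]
  refine Fintype.sum_equiv (Equiv.subtypeEquivRight ?_) _ _ (fun 𝓕 => rfl)
  intro 𝓕
  simp only [BetaAux.P, BetaAux.mn]
  constructor
  · rintro ⟨ha, hb, hc⟩
    exact ⟨ha, hb, hc _⟩
  · rintro ⟨ha, hb, hc⟩
    refine ⟨ha, hb, fun m => ?_⟩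
    rcases lt_or_eq_of_le (show (m : ℕ) ≤ k' from by have := m.isLt; omega) with h | h
    · have hml : m < (⟨k' + 1 - 1, by omega⟩ : Fin (k' + 1)) := by
        rw [Fin.lt_def]; simpa using h
      exact lt_trans hc (hb m _ hml)
    · have hme : m = (⟨k' + 1 - 1, by omega⟩ : Fin (k' + 1)) := Fin.ext (by simpa using h)
      rw [hme]; exact hc
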